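/- Let q be a prime power and 𝒮 an arbitrary subset of the set of primes in 𝔽_q[T]. For every positive integer n, the sum over monic B ∈ 𝒟(𝒮) with 1 ≤ deg B ≤ n of μ(B)·Ω(B)/q^{deg B} equals (1/q^n) times the sum over monic A of degree n of (Q_𝒮^{(2)}(A) − Q_𝒮^{(1)}(A)). -/

import Mathlib

open Filter Topology Polynomial Asymptotics
open scoped Classical

variable {F : Type} [Field F] [Fintype F]

/-- The Möbius function for (monic) polynomials over a finite field:
`μ(A) = 1` if `A = 1`, `(-1)^k` if `A` is a product of `k` distinct primes, `0` otherwise. -/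
noncomputable def muFF (A : Polynomial F) : ℤ :=
  if Squarefree A then
    (-1) ^ (UniqueFactorizationMonoid.normalizedFactors A).toFinset.card
  else 0

/-- `𝒩(A)`: the set of degrees of prime (monic irreducible) divisors of `A`. -/
noncomputable def NSet (A : Polynomial F) : Finset ℕ :=
  (Finset.range (A.natDegree + 1)).filter fun d =>
    ∃ P : Polynomial F, P.Monic ∧ Irreducible P ∧ P ∣ A ∧ P.natDegree = d

/-- `Ω(A)`: the number of distinct degrees of prime divisors of `A`. -/
noncomputable def OmegaFF (A : Polynomial F) : ℕ := (NSet A).card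

/-- `δ_k(A)`: the `k`-th smallest element of `𝒩(A)` (and `0` if `k > Ω(A)`). -/
noncomputable def deltaSmall (k : ℕ) (A : Polynomial F) : ℕ :=
  ((NSet A).sort (· ≤ ·)).getD (k - 1) 0

/-- `Δ_k(A)`: the `k`-th largest element of `𝒩(A)` (and `0` if `k > Ω(A)`). -/
noncomputable def DeltaLarge (k : ℕ) (A : Polynomial F) : ℕ :=
  (((NSet A).sort (· ≤ ·)).reverse).getD (k - 1) 0

/-- `P_min(A)`: the set of prime divisors of `A` of minimal degree `δ₁(A)`. -/
noncomputable def Pmin (A : Polynomial F) : Set (Polynomial F) :=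
  {P | P.Monic ∧ Irreducible P ∧ P ∣ A ∧ P.natDegree = deltaSmall 1 A}

/-- `𝒟(𝒮)`: monic polynomials whose set of minimal-degree prime divisors is a
singleton `{P}` with `P ∈ 𝒮`. -/
noncomputable def DSet (S : Set (Polynomial F)) : Set (Polynomial F) :=
  {A | A.Monic ∧ ∃ P ∈ S, Pmin A = {P}}

/-- `Q_𝒮^{(k)}(A) = #{P ∈ 𝒮 : P ∣ A, deg P = Δ_k(A)}`. -/
noncomputable def QS (S : Set (Polynomial F)) (k : ℕ) (A : Polynomial F) : ℕ :=
  {P | P ∈ S ∧ P ∣ A ∧ P.natDegree = DeltaLarge k A}.ncard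


section Aux
open UniqueFactorizationMonoid Finset

variable {F : Type} [Field F] [Fintype F]

-- ========== finiteness and counting ==========

lemma aux_finite_le (n : ℕ) : {p : Polynomial F | p.natDegree ≤ n}.Finite := by
  haveI : Finite (Polynomial.degreeLT F (n+1)) :=
    Finite.of_equiv _ (Polynomial.degreeLTEquiv F (n+1)).toEquiv.symm
  have h : {p : Polynomial F | p.natDegree ≤ n} = ↑(Polynomial.degreeLT F (n+1)) := by
    ext p
    simp only [Set.mem_setOf_eq, SetLike.mem_coe, Polynomial.mem_degreeLT]
    rcases eq_or_ne p 0 with rfl | hp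
    · simp only [Polynomial.natDegree_zero, Nat.zero_le, true_iff, Polynomial.degree_zero]
      exact WithBot.bot_lt_coe _
    · rw [← Polynomial.natDegree_lt_iff_degree_lt hp, Nat.lt_succ_iff]
  rw [h]
  exact Set.toFinite _

noncomputable def monicEquiv (d : ℕ) :
    {p : Polynomial F // p.Monic ∧ p.natDegree = d} ≃ Polynomial.degreeLT F d where
  toFun p := ⟨p.1 - Polynomial.X ^ d, by
    rw [Polynomial.mem_degreeLT]
    have h1 : p.1.degree = (d : WithBot ℕ) := by
      have := Polynomial.degree_eq_natDegree p.2.1.ne_zero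
      rw [p.2.2] at this; exact this
    have := Polynomial.degree_sub_lt (q := (Polynomial.X : Polynomial F) ^ d)
      (by rw [h1, Polynomial.degree_X_pow]) p.2.1.ne_zero
      (by rw [p.2.1.leadingCoeff, (Polynomial.monic_X_pow d).leadingCoeff])
    rwa [h1] at this⟩
  invFun v := ⟨Polynomial.X ^ d + v.1, by
    have hv : (v.1 : Polynomial F).degree < (d : WithBot ℕ) := Polynomial.mem_degreeLT.mp v.2
    refine ⟨Polynomial.monic_X_pow_add hv, ?_⟩
    have : (Polynomial.X ^ d + v.1 : Polynomial F).degree = (d : WithBot ℕ) := by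
      rcases eq_or_ne (v.1 : Polynomial F) 0 with h0 | h0
      · rw [h0, add_zero, Polynomial.degree_X_pow]
      · rw [Polynomial.degree_add_eq_left_of_degree_lt (by rwa [Polynomial.degree_X_pow]),
          Polynomial.degree_X_pow]
    exact Polynomial.natDegree_eq_of_degree_eq_some this⟩
  left_inv p := by ext1; ring
  right_inv v := by ext1; push_cast; ring

lemma card_monic' (d : ℕ) :
    {p : Polynomial F | p.Monic ∧ p.natDegree = d}.ncard = Fintype.card F ^ d := by
  rw [← Nat.card_coe_set_eq]
  have e1 := (monicEquiv (F := F) d).trans (Polynomial.degreeLTEquiv F d).toEquiv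
  have h : Nat.card {p : Polynomial F // p.Monic ∧ p.natDegree = d}
      = Nat.card (Fin d → F) := Nat.card_congr e1
  have h2 : Nat.card ↥{p : Polynomial F | p.Monic ∧ p.natDegree = d}
      = Nat.card {p : Polynomial F // p.Monic ∧ p.natDegree = d} := rfl
  rw [h2, h, Nat.card_eq_fintype_card, Fintype.card_fun, Fintype.card_fin]

lemma card_multiples (B : Polynomial F) (hB : B.Monic) {n : ℕ} (h : B.natDegree ≤ n) :
    {A : Polynomial F | A.Monic ∧ A.natDegree = n ∧ B ∣ A}.ncard
      = Fintype.card F ^ (n - B.natDegree) := by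
  have hB0 : B ≠ 0 := hB.ne_zero
  have himg : {A : Polynomial F | A.Monic ∧ A.natDegree = n ∧ B ∣ A}
      = (fun C => B * C) '' {C : Polynomial F | C.Monic ∧ C.natDegree = n - B.natDegree} := by
    ext A
    constructor
    · rintro ⟨hA, hAn, C, rfl⟩
      have hC0 : C ≠ 0 := by rintro rfl; rw [mul_zero] at hA; exact hA.ne_zero rfl
      have hCm : C.Monic := by
        have := hA.leadingCoeff
        rw [Polynomial.leadingCoeff_mul, hB.leadingCoeff, one_mul] at this
        exact this
      refine ⟨C, ⟨hCm, ?_⟩, rfl⟩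
      rw [Polynomial.natDegree_mul hB0 hC0] at hAn
      omega
    · rintro ⟨C, ⟨hCm, hCd⟩, rfl⟩
      refine ⟨hB.mul hCm, ?_, dvd_mul_right _ _⟩
      rw [Polynomial.natDegree_mul hB0 hCm.ne_zero, hCd]
      omega
  rw [himg, Set.ncard_image_of_injective _ (mul_right_injective₀ hB0), card_monic']

-- ========== sorted list lemmas ==========

lemma card_filter_gt_aux (s : Finset ℕ) {x : ℕ} {i : ℕ}
    (hi : i < (s.sort (· ≤ ·)).length) (hix : (s.sort (· ≤ ·))[i] = x) :
    (s.filter (fun y => x < y)).card = s.card - 1 - i := by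
  set l := s.sort (· ≤ ·) with hl
  have hnd : l.Nodup := Finset.sort_nodup _ _
  have hsorted : l.Pairwise (· < ·) := (Finset.sortedLT_sort s).pairwise
  have hpg := List.pairwise_iff_getElem.mp hsorted
  have hfe : s.filter (fun y => x < y) = (l.drop (i+1)).toFinset := by
    ext y
    simp only [Finset.mem_filter, List.mem_toFinset]
    constructor
    · rintro ⟨hys, hxy⟩
      have : y ∈ l := (Finset.mem_sort _).mpr hys
      obtain ⟨j, hj, rfl⟩ := List.mem_iff_getElem.mp this
      have hij : i < j := by
        by_contra hc
        push_neg at hc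
        rcases lt_or_eq_of_le hc with h | h
        · have := hpg j i hj hi h
          rw [hix] at this
          omega
        · subst h
          rw [hix] at hxy
          exact lt_irrefl _ hxy
      rw [List.mem_iff_getElem]
      refine ⟨j - (i+1), by simp only [List.length_drop]; omega, ?_⟩
      rw [List.getElem_drop]
      congr 1
      omega
    · intro hy
      obtain ⟨j, hj, rfl⟩ := List.mem_iff_getElem.mp hy
      rw [List.getElem_drop]
      simp only [List.length_drop] at hj
      refine ⟨(Finset.mem_sort _).mp (List.getElem_mem _), ?_⟩
      rw [← hix]
      exact hpg i (i + 1 + j) hi (by omega) (by omega)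
  have hlen : l.length = s.card := Finset.length_sort _
  rw [hfe, List.toFinset_card_of_nodup (hnd.sublist (List.drop_sublist _ _)),
    List.length_drop]
  omega

lemma card_filter_gt_iff (s : Finset ℕ) {x : ℕ} (hx : x ∈ s) (k : ℕ) :
    (s.filter (fun y => x < y)).card = k
      ↔ (k < s.card ∧ x = (s.sort (· ≤ ·)).reverse.getD k 0) := by
  have hlen : (s.sort (· ≤ ·)).length = s.card := Finset.length_sort _
  have hnd : (s.sort (· ≤ ·)).Nodup := Finset.sort_nodup _ _
  obtain ⟨i, hi, hix⟩ := List.mem_iff_getElem.mp ((Finset.mem_sort (α := ℕ) (· ≤ ·)).mpr hx)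
  have haux := card_filter_gt_aux s hi hix
  constructor
  · intro hk
    have hklt : k < s.card := by omega
    refine ⟨hklt, ?_⟩
    have h1 : k < (s.sort (· ≤ ·)).reverse.length := by
      rw [List.length_reverse]; omega
    rw [List.getD_eq_getElem _ _ h1, List.getElem_reverse]
    have hidx : (s.sort (· ≤ ·)).length - 1 - k = i := by omega
    simp only [hidx, hix]
  · rintro ⟨hklt, hxval⟩
    have h1 : k < (s.sort (· ≤ ·)).reverse.length := by
      rw [List.length_reverse]; omega
    rw [List.getD_eq_getElem _ _ h1, List.getElem_reverse] at hxval
    have h2 : (s.sort (· ≤ ·))[(s.sort (· ≤ ·)).length - 1 - k]'(by omega)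
        = (s.sort (· ≤ ·))[i] := by rw [hix, ← hxval]
    have h3 := (List.Nodup.getElem_inj_iff hnd).mp h2
    omega

lemma getD_zero_eq_min' (s : Finset ℕ) (hs : s.Nonempty) :
    (s.sort (· ≤ ·)).getD 0 0 = s.min' hs := by
  have hlen : 0 < (s.sort (· ≤ ·)).length := by
    rw [Finset.length_sort]
    exact Finset.card_pos.mpr hs
  rw [List.getD_eq_getElem _ _ hlen]
  exact Finset.sorted_zero_eq_min'

-- ========== normalized factors lemmas ==========

omit [Fintype F] in
lemma monic_of_mem_nf {B P : Polynomial F} (h : P ∈ normalizedFactors B) : P.Monic := by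
  have h1 : normalize P = P := normalize_normalized_factor _ h
  have h2 : P ≠ 0 := (prime_of_normalized_factor _ h).ne_zero
  rw [← h1]
  exact Polynomial.monic_normalize h2

omit [Fintype F] in
lemma mem_nf_iff {B P : Polynomial F} (hB : B ≠ 0) :
    P ∈ (normalizedFactors B).toFinset ↔ P.Monic ∧ Irreducible P ∧ P ∣ B := by
  rw [Multiset.mem_toFinset]
  constructor
  · intro h
    exact ⟨monic_of_mem_nf h, irreducible_of_normalized_factor _ h,
      dvd_of_mem_normalizedFactors h⟩
  · rintro ⟨hM, hI, hd⟩
    obtain ⟨Q, hQ, hassoc⟩ := exists_mem_normalizedFactors_of_dvd hB hI hd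
    rwa [Polynomial.eq_of_monic_of_associated hM (monic_of_mem_nf hQ) hassoc]

omit [Fintype F] in
lemma NSet_eq {B : Polynomial F} (hB : B ≠ 0) :
    NSet B = (normalizedFactors B).toFinset.image Polynomial.natDegree := by
  ext d
  simp only [NSet, Finset.mem_filter, Finset.mem_range, Finset.mem_image]
  constructor
  · rintro ⟨-, P, hM, hI, hd, rfl⟩
    exact ⟨P, (mem_nf_iff hB).mpr ⟨hM, hI, hd⟩, rfl⟩
  · rintro ⟨P, hP, rfl⟩
    obtain ⟨hM, hI, hd⟩ := (mem_nf_iff hB).mp hP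
    exact ⟨Nat.lt_succ_of_le (Polynomial.natDegree_le_of_dvd hd hB), P, hM, hI, hd, rfl⟩


-- ========== products over subsets of the prime divisors ==========

omit [Fintype F] in
lemma prodU_eq_val_prod (U : Finset (Polynomial F)) : (∏ P ∈ U, P) = U.val.prod := by
  rw [Finset.prod_eq_multiset_prod, Multiset.map_id']

omit [Fintype F] in
lemma prodU_monic {U : Finset (Polynomial F)}
    (h : ∀ P ∈ U, (P : Polynomial F).Monic) : (∏ P ∈ U, P).Monic :=
  Polynomial.monic_prod_of_monic _ _ h

omit [Fintype F] in
lemma prodU_dvd {A : Polynomial F} (hA : A ≠ 0) {U : Finset (Polynomial F)}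
    (hU : U ⊆ (normalizedFactors A).toFinset) : (∏ P ∈ U, P) ∣ A := by
  have h1 : U.val ≤ normalizedFactors A := by
    rw [Multiset.le_iff_subset U.nodup]
    intro x hx
    exact Multiset.mem_toFinset.mp (hU hx)
  have h2 : U.val.prod ∣ (normalizedFactors A).prod := Multiset.prod_dvd_prod_of_le h1
  rw [prodU_eq_val_prod]
  exact h2.trans (prod_normalizedFactors hA).dvd

omit [Fintype F] in
lemma nf_prodU {U : Finset (Polynomial F)}
    (hIrr : ∀ P ∈ U, Irreducible (P : Polynomial F))
    (hMon : ∀ P ∈ U, (P : Polynomial F).Monic) :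
    normalizedFactors (∏ P ∈ U, P) = U.val := by
  rw [prodU_eq_val_prod, normalizedFactors_prod_eq _ (fun a ha => hIrr a ha)]
  exact Multiset.map_congr rfl (fun x hx => (hMon x hx).normalize_eq_self) |>.trans
    (Multiset.map_id _)

omit [Fintype F] in
lemma squarefree_prodU {U : Finset (Polynomial F)}
    (hIrr : ∀ P ∈ U, Irreducible (P : Polynomial F))
    (hMon : ∀ P ∈ U, (P : Polynomial F).Monic) :
    Squarefree (∏ P ∈ U, P) := by
  rw [UniqueFactorizationMonoid.squarefree_iff_nodup_normalizedFactors
    (prodU_monic hMon).ne_zero, nf_prodU hIrr hMon]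
  exact U.nodup

omit [Fintype F] in
lemma muFF_prodU {U : Finset (Polynomial F)}
    (hIrr : ∀ P ∈ U, Irreducible (P : Polynomial F))
    (hMon : ∀ P ∈ U, (P : Polynomial F).Monic) :
    muFF (∏ P ∈ U, P) = (-1) ^ U.card := by
  rw [muFF, if_pos (squarefree_prodU hIrr hMon), nf_prodU hIrr hMon]
  congr 1
  · exact congrArg Finset.card (Finset.val_toFinset U)

omit [Fintype F] in
lemma NSet_prodU {U : Finset (Polynomial F)}
    (hIrr : ∀ P ∈ U, Irreducible (P : Polynomial F))
    (hMon : ∀ P ∈ U, (P : Polynomial F).Monic) :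
    NSet (∏ P ∈ U, P) = U.image Polynomial.natDegree := by
  rw [NSet_eq (prodU_monic hMon).ne_zero, nf_prodU hIrr hMon, Finset.val_toFinset]

omit [Fintype F] in
lemma mem_divisor_prodU_iff {U : Finset (Polynomial F)} {P : Polynomial F}
    (hIrr : ∀ P ∈ U, Irreducible (P : Polynomial F))
    (hMon : ∀ P ∈ U, (P : Polynomial F).Monic) :
    (P.Monic ∧ Irreducible P ∧ P ∣ (∏ Q ∈ U, Q)) ↔ P ∈ U := by
  rw [← mem_nf_iff (prodU_monic hMon).ne_zero, nf_prodU hIrr hMon, Finset.val_toFinset]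



-- ========== DSet characterization ==========

omit [Fintype F] in
lemma deltaSmall_one_eq_min' {B : Polynomial F} (h : (NSet B).Nonempty) :
    deltaSmall 1 B = (NSet B).min' h :=
  getD_zero_eq_min' _ h

omit [Fintype F] in
lemma Pmin_eq {B : Polynomial F} (hB : B ≠ 0) :
    Pmin B = ↑((normalizedFactors B).toFinset.filter
      (fun P => P.natDegree = deltaSmall 1 B)) := by
  ext P
  simp only [Pmin, Set.mem_setOf_eq, Finset.coe_filter, mem_nf_iff hB]
  tauto

omit [Fintype F] in
lemma prodU_mem_DSet_iff {S : Set (Polynomial F)} {U : Finset (Polynomial F)}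
    (hIrr : ∀ P ∈ U, Irreducible (P : Polynomial F))
    (hMon : ∀ P ∈ U, (P : Polynomial F).Monic) :
    (∏ P ∈ U, P) ∈ DSet S
      ↔ ∃ P ∈ U, P ∈ S ∧ ∀ Q ∈ U, Q ≠ P → P.natDegree < Q.natDegree := by
  have hB0 : (∏ P ∈ U, P) ≠ 0 := (prodU_monic hMon).ne_zero
  have hPmin : Pmin (∏ P ∈ U, P)
      = ↑(U.filter (fun P => P.natDegree = deltaSmall 1 (∏ P ∈ U, P))) := by
    rw [Pmin_eq hB0, nf_prodU hIrr hMon, Finset.val_toFinset]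
  constructor
  · rintro ⟨-, P, hPS, hP⟩
    rw [hPmin, ← Finset.coe_singleton, Finset.coe_inj] at hP
    have hPmem : P ∈ U.filter (fun P => P.natDegree = deltaSmall 1 (∏ P ∈ U, P)) := by
      rw [hP]; exact Finset.mem_singleton_self P
    rw [Finset.mem_filter] at hPmem
    obtain ⟨hPU, hPdeg⟩ := hPmem
    have hne : (NSet (∏ P ∈ U, P)).Nonempty := by
      rw [NSet_prodU hIrr hMon]
      exact ⟨P.natDegree, Finset.mem_image_of_mem _ hPU⟩
    refine ⟨P, hPU, hPS, fun Q hQU hQP => ?_⟩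
    have h1 : deltaSmall 1 (∏ P ∈ U, P) ≤ Q.natDegree := by
      rw [deltaSmall_one_eq_min' hne]
      refine Finset.min'_le _ _ ?_
      rw [NSet_prodU hIrr hMon]
      exact Finset.mem_image_of_mem _ hQU
    rcases lt_or_eq_of_le h1 with h | h
    · omega
    · exfalso
      have : Q ∈ U.filter (fun P => P.natDegree = deltaSmall 1 (∏ P ∈ U, P)) :=
        Finset.mem_filter.mpr ⟨hQU, h.symm⟩
      rw [hP, Finset.mem_singleton] at this
      exact hQP this
  · rintro ⟨P, hPU, hPS, hmin⟩
    have hne : (NSet (∏ P ∈ U, P)).Nonempty := by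
      rw [NSet_prodU hIrr hMon]
      exact ⟨P.natDegree, Finset.mem_image_of_mem _ hPU⟩
    have hdeg : deltaSmall 1 (∏ P ∈ U, P) = P.natDegree := by
      rw [deltaSmall_one_eq_min' hne]
      apply le_antisymm
      · refine Finset.min'_le _ _ ?_
        rw [NSet_prodU hIrr hMon]
        exact Finset.mem_image_of_mem _ hPU
      · have hmem := Finset.min'_mem (NSet (∏ P ∈ U, P)) hne
        have hmem' : (NSet (∏ P ∈ U, P)).min' hne ∈ U.image Polynomial.natDegree := by
          rw [← NSet_prodU hIrr hMon]; exact hmem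
        rw [Finset.mem_image] at hmem'
        obtain ⟨Q, hQU, hQ⟩ := hmem'
        rcases eq_or_ne Q P with rfl | hQP
        · omega
        · have := hmin Q hQU hQP
          omega
    refine ⟨prodU_monic hMon, P, hPS, ?_⟩
    rw [hPmin, ← Finset.coe_singleton, Finset.coe_inj]
    rw [Finset.eq_singleton_iff_unique_mem]
    refine ⟨Finset.mem_filter.mpr ⟨hPU, by omega⟩, fun Q hQ => ?_⟩
    rw [Finset.mem_filter] at hQ
    by_contra hQP
    have := hmin Q hQ.1 hQP
    omega

-- ========== powerset sum lemmas ==========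

lemma sum_powerset_exists {α : Type*} [DecidableEq α] (W : Finset α) (p : α → Prop)
    [DecidablePred p] :
    ∑ U ∈ W.powerset, (-1 : ℤ) ^ U.card * (if ∃ x ∈ U, p x then 1 else 0)
      = (if W = ∅ then 1 else 0)
        - (if W.filter (fun x => ¬ p x) = ∅ then 1 else 0) := by
  have key : ∀ U ∈ W.powerset,
      (-1 : ℤ) ^ U.card * (if ∃ x ∈ U, p x then 1 else 0)
        = (-1 : ℤ) ^ U.card
          - (if U ∈ (W.filter (fun x => ¬ p x)).powerset then (-1 : ℤ) ^ U.card else 0) := by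
    intro U hU
    rw [Finset.mem_powerset] at hU
    by_cases h : ∃ x ∈ U, p x
    · rw [if_pos h, if_neg, mul_one, sub_zero]
      intro hsub
      obtain ⟨x, hxU, hpx⟩ := h
      have := Finset.mem_powerset.mp hsub hxU
      rw [Finset.mem_filter] at this
      exact this.2 hpx
    · rw [if_neg h, if_pos, mul_zero, sub_self]
      rw [Finset.mem_powerset]
      intro x hx
      rw [Finset.mem_filter]
      exact ⟨hU hx, fun hpx => h ⟨x, hx, hpx⟩⟩
  rw [Finset.sum_congr rfl key, Finset.sum_sub_distrib, Finset.sum_powerset_neg_one_pow_card]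
  congr 1
  rw [← Finset.sum_filter]
  have hfp : W.powerset.filter (fun U => U ∈ (W.filter (fun x => ¬ p x)).powerset)
      = (W.filter (fun x => ¬ p x)).powerset := by
    ext U
    simp only [Finset.mem_filter, Finset.mem_powerset]
    exact ⟨fun h => h.2, fun h => ⟨h.trans (Finset.filter_subset _ _), h⟩⟩
  rw [hfp, Finset.sum_powerset_neg_one_pow_card]

lemma sum_powerset_image_card {α : Type*} [DecidableEq α] (W : Finset α) (w : α → ℕ) :
    ∑ U ∈ W.powerset, (-1 : ℤ) ^ U.card * ((U.image w).card : ℤ)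
      = - (if (W.image w).card = 1 then 1 else 0) := by
  have hcard : ∀ U ∈ W.powerset,
      ((U.image w).card : ℤ) = ∑ d ∈ W.image w, (if ∃ x ∈ U, w x = d then 1 else 0) := by
    intro U hU
    rw [Finset.mem_powerset] at hU
    have hsub : U.image w ⊆ W.image w := Finset.image_subset_image hU
    have : ∀ d, (∃ x ∈ U, w x = d) ↔ d ∈ U.image w := by
      intro d
      simp [Finset.mem_image]
    rw [Finset.sum_congr rfl (fun d _ => by rw [if_congr (this d) rfl rfl]),
      ← Finset.sum_filter, Finset.filter_mem_eq_inter,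
      Finset.inter_eq_right.mpr hsub, Finset.sum_const, nsmul_eq_mul, mul_one]
  calc ∑ U ∈ W.powerset, (-1 : ℤ) ^ U.card * ((U.image w).card : ℤ)
      = ∑ U ∈ W.powerset, ∑ d ∈ W.image w,
          (-1 : ℤ) ^ U.card * (if ∃ x ∈ U, w x = d then 1 else 0) := by
        refine Finset.sum_congr rfl fun U hU => ?_
        rw [hcard U hU, Finset.mul_sum]
    _ = ∑ d ∈ W.image w, ∑ U ∈ W.powerset,
          (-1 : ℤ) ^ U.card * (if ∃ x ∈ U, w x = d then 1 else 0) := Finset.sum_comm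
    _ = ∑ d ∈ W.image w, ((if W = ∅ then 1 else 0)
          - (if W.filter (fun x => ¬ w x = d) = ∅ then 1 else 0)) := by
        exact Finset.sum_congr rfl fun d _ => sum_powerset_exists W (fun x => w x = d)
    _ = - (if (W.image w).card = 1 then 1 else 0) := by
        rcases Finset.eq_empty_or_nonempty W with rfl | hW
        · simp
        · have hWne : W ≠ ∅ := hW.ne_empty
          have himgne : (W.image w).Nonempty := hW.image w
          rw [Finset.sum_congr rfl (fun d _ => by rw [if_neg hWne, zero_sub]),
            Finset.sum_neg_distrib, neg_inj]
          have hiff : ∀ d, (W.filter (fun x => ¬ w x = d) = ∅) ↔ W.image w = {d} := by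
            intro d
            rw [Finset.filter_eq_empty_iff]
            constructor
            · intro h
              apply Finset.eq_singleton_iff_unique_mem.mpr
              obtain ⟨x, hx⟩ := hW
              have hxd : w x = d := by
                have := h hx
                simpa using this
              refine ⟨hxd ▸ Finset.mem_image_of_mem w hx, fun e he => ?_⟩
              rw [Finset.mem_image] at he
              obtain ⟨y, hy, rfl⟩ := he
              have := h hy
              simpa using this
            · intro h x hx
              have hmem : w x ∈ W.image w := Finset.mem_image_of_mem w hx
              rw [h, Finset.mem_singleton] at hmem
              simp [hmem]
          rcases eq_or_ne (W.image w).card 1 with h1 | h1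
          · obtain ⟨d0, hd0⟩ := Finset.card_eq_one.mp h1
            rw [if_pos h1, hd0, Finset.sum_singleton, if_pos ((hiff d0).mpr hd0)]
          · rw [if_neg h1]
            refine Finset.sum_eq_zero fun d hd => ?_
            rw [if_neg]
            intro hc
            rw [(hiff d).mp hc, Finset.card_singleton] at h1
            exact h1 rfl
  


lemma innerPowSum {α : Type*} [DecidableEq α] (W : Finset α) (w : α → ℕ) :
    ∑ U ∈ W.powerset, (-1 : ℤ) ^ (U.card + 1) * (1 + ((U.image w).card : ℤ))
      = (if (W.image w).card = 1 then 1 else 0) - (if W = ∅ then 1 else 0) := by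
  have hterm : ∀ U ∈ W.powerset, (-1 : ℤ) ^ (U.card + 1) * (1 + ((U.image w).card : ℤ))
      = -((-1 : ℤ) ^ U.card) - (-1 : ℤ) ^ U.card * ((U.image w).card : ℤ) := by
    intro U _
    ring
  rw [Finset.sum_congr rfl hterm, Finset.sum_sub_distrib, Finset.sum_neg_distrib,
    Finset.sum_powerset_neg_one_pow_card, sum_powerset_image_card]
  ring

-- ========== DeltaLarge indicator lemmas ==========

omit [Fintype F] in
lemma image_filter_deg {A : Polynomial F} (hA0 : A ≠ 0) (P : Polynomial F) :
    ((normalizedFactors A).toFinset.filter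
        (fun Q => P.natDegree < Q.natDegree)).image Polynomial.natDegree
      = (NSet A).filter (fun d => P.natDegree < d) := by
  rw [NSet_eq hA0]
  ext d
  simp only [Finset.mem_image, Finset.mem_filter]
  constructor
  · rintro ⟨Q, ⟨hQ, hlt⟩, rfl⟩
    exact ⟨⟨Q, hQ, rfl⟩, hlt⟩
  · rintro ⟨⟨Q, hQ, rfl⟩, hlt⟩
    exact ⟨Q, ⟨hQ, hlt⟩, rfl⟩

omit [Fintype F] in
lemma DeltaLarge_eq_getD (k : ℕ) (A : Polynomial F) :
    DeltaLarge (k + 1) A = ((NSet A).sort (· ≤ ·)).reverse.getD k 0 := by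
  simp [DeltaLarge]

omit [Fintype F] in
lemma indicator_one {A : Polynomial F} (hA0 : A ≠ 0) {P : Polynomial F}
    (hP : P ∈ (normalizedFactors A).toFinset) :
    ((normalizedFactors A).toFinset.filter (fun Q => P.natDegree < Q.natDegree) = ∅)
      ↔ P.natDegree = DeltaLarge 1 A := by
  have hdmem : P.natDegree ∈ NSet A := by
    rw [NSet_eq hA0]
    exact Finset.mem_image_of_mem _ hP
  have hcard : 0 < (NSet A).card := Finset.card_pos.mpr ⟨_, hdmem⟩
  rw [← Finset.image_eq_empty (f := Polynomial.natDegree), image_filter_deg hA0,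
    ← Finset.card_eq_zero, card_filter_gt_iff _ hdmem 0, DeltaLarge_eq_getD 0]
  constructor
  · exact fun h => h.2
  · exact fun h => ⟨hcard, h⟩

omit [Fintype F] in
lemma indicator_two {A : Polynomial F} (hA0 : A ≠ 0) {P : Polynomial F}
    (hP : P ∈ (normalizedFactors A).toFinset) :
    ((((normalizedFactors A).toFinset.filter
        (fun Q => P.natDegree < Q.natDegree)).image Polynomial.natDegree).card = 1)
      ↔ P.natDegree = DeltaLarge 2 A := by
  have hdmem : P.natDegree ∈ NSet A := by
    rw [NSet_eq hA0]
    exact Finset.mem_image_of_mem _ hP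
  have hpos : 0 < P.natDegree := ((mem_nf_iff hA0).mp hP).2.1.natDegree_pos
  rw [image_filter_deg hA0, card_filter_gt_iff _ hdmem 1, DeltaLarge_eq_getD 1]
  constructor
  · exact fun h => h.2
  · intro h
    refine ⟨?_, h⟩
    by_contra hc
    push_neg at hc
    have hcard : (NSet A).card = 1 := by
      have : 0 < (NSet A).card := Finset.card_pos.mpr ⟨_, hdmem⟩
      omega
    have hlen : ((NSet A).sort (· ≤ ·)).reverse.length = 1 := by
      rw [List.length_reverse, Finset.length_sort, hcard]
    rw [List.getD_eq_default _ _ (by omega)] at h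
    omega

-- ========== QS as a Finset count ==========

omit [Fintype F] in
lemma QS_eq_card (S : Set (Polynomial F))
    (hS : S ⊆ {P : Polynomial F | P.Monic ∧ Irreducible P})
    {A : Polynomial F} (hA0 : A ≠ 0) (k : ℕ) :
    QS S k A = ((normalizedFactors A).toFinset.filter
      (fun P => P ∈ S ∧ P.natDegree = DeltaLarge k A)).card := by
  rw [QS]
  have hset : {P : Polynomial F | P ∈ S ∧ P ∣ A ∧ P.natDegree = DeltaLarge k A}
      = ↑((normalizedFactors A).toFinset.filter
          (fun P => P ∈ S ∧ P.natDegree = DeltaLarge k A)) := by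
    ext P
    simp only [Set.mem_setOf_eq, Finset.coe_filter, mem_nf_iff hA0]
    constructor
    · rintro ⟨hPS, hdvd, hdeg⟩
      obtain ⟨hM, hI⟩ := hS hPS
      exact ⟨⟨hM, hI, hdvd⟩, hPS, hdeg⟩
    · rintro ⟨⟨hM, hI, hdvd⟩, hPS, hdeg⟩
      exact ⟨hPS, hdvd, hdeg⟩
  rw [hset, Set.ncard_coe_finset]


-- ========== the per-A identity ==========

lemma perA (S : Set (Polynomial F))
    (hS : S ⊆ {P : Polynomial F | P.Monic ∧ Irreducible P})
    {A : Polynomial F} (hA : A.Monic)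
    (T' : Finset (Polynomial F)) (hT' : ∀ B, B ∈ T' ↔ B ∈ DSet S ∧ B ∣ A) :
    ∑ B ∈ T', muFF B * (OmegaFF B : ℤ) = (QS S 2 A : ℤ) - (QS S 1 A : ℤ) := by
  classical
  have hA0 : A ≠ 0 := hA.ne_zero
  have hDmon : ∀ P ∈ (normalizedFactors A).toFinset, (P : Polynomial F).Monic :=
    fun P hP => ((mem_nf_iff hA0).mp hP).1
  have hDirr : ∀ P ∈ (normalizedFactors A).toFinset, Irreducible P :=
    fun P hP => ((mem_nf_iff hA0).mp hP).2.1
  -- Step 1: restrict to squarefree B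
  have hstep1 : ∑ B ∈ T'.filter Squarefree, muFF B * (OmegaFF B : ℤ)
      = ∑ B ∈ T', muFF B * (OmegaFF B : ℤ) := by
    apply Finset.sum_filter_of_ne
    intro B _ hne
    by_contra hsq
    rw [muFF, if_neg hsq, zero_mul] at hne
    exact hne rfl
  -- Step 2: reindex by subsets of the prime divisors
  have hstep2 : ∑ U ∈ (normalizedFactors A).toFinset.powerset.filter
        (fun U => ∃ P ∈ U, P ∈ S ∧ ∀ Q ∈ U, Q ≠ P → P.natDegree < Q.natDegree),
          (-1 : ℤ) ^ U.card * ((U.image Polynomial.natDegree).card : ℤ)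
      = ∑ B ∈ T'.filter Squarefree, muFF B * (OmegaFF B : ℤ) := by
    refine Finset.sum_bij (fun U _ => ∏ P ∈ U, P) ?_ ?_ ?_ ?_
    · intro U hU
      rw [Finset.mem_filter, Finset.mem_powerset] at hU
      obtain ⟨hUD, hcond⟩ := hU
      have hM := fun P hP => hDmon P (hUD hP)
      have hI := fun P hP => hDirr P (hUD hP)
      rw [Finset.mem_filter, hT']
      exact ⟨⟨(prodU_mem_DSet_iff hI hM).mpr hcond, prodU_dvd hA0 hUD⟩,
        squarefree_prodU hI hM⟩
    · intro U1 h1 U2 h2 heq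
      rw [Finset.mem_filter, Finset.mem_powerset] at h1 h2
      have e1 := nf_prodU (fun P hP => hDirr P (h1.1 hP)) (fun P hP => hDmon P (h1.1 hP))
      have e2 := nf_prodU (fun P hP => hDirr P (h2.1 hP)) (fun P hP => hDmon P (h2.1 hP))
      have := congrArg normalizedFactors heq
      rw [e1, e2] at this
      exact Finset.val_inj.mp this
    · intro B hB
      rw [Finset.mem_filter, hT'] at hB
      obtain ⟨⟨hBD, hBdvd⟩, hsq⟩ := hB
      have hBmon : B.Monic := hBD.1
      have hB0 : B ≠ 0 := hBmon.ne_zero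
      have hsubset : (normalizedFactors B).toFinset ⊆ (normalizedFactors A).toFinset :=
        Multiset.toFinset_subset.mpr (Multiset.subset_of_le
          ((dvd_iff_normalizedFactors_le_normalizedFactors hB0 hA0).mp hBdvd))
      have hIm : ∀ P ∈ (normalizedFactors B).toFinset, (P : Polynomial F).Monic :=
        fun P hP => monic_of_mem_nf (Multiset.mem_toFinset.mp hP)
      have hIi : ∀ P ∈ (normalizedFactors B).toFinset, Irreducible P :=
        fun P hP => irreducible_of_normalized_factor _ (Multiset.mem_toFinset.mp hP)
      have hnd : (normalizedFactors B).Nodup :=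
        (UniqueFactorizationMonoid.squarefree_iff_nodup_normalizedFactors hB0).mp hsq
      have hval : ∏ P ∈ (normalizedFactors B).toFinset, P = (normalizedFactors B).prod := by
        rw [prodU_eq_val_prod, Multiset.toFinset_val, Multiset.dedup_eq_self.mpr hnd]
      have hassoc : Associated (∏ P ∈ (normalizedFactors B).toFinset, P) B := by
        rw [hval]; exact prod_normalizedFactors hB0
      have hprod : ∏ P ∈ (normalizedFactors B).toFinset, P = B :=
        Polynomial.eq_of_monic_of_associated (prodU_monic hIm) hBmon hassoc
      refine ⟨(normalizedFactors B).toFinset, ?_, hprod⟩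
      rw [Finset.mem_filter, Finset.mem_powerset]
      refine ⟨hsubset, (prodU_mem_DSet_iff hIi hIm).mp ?_⟩
      rw [hprod]
      exact hBD
    · intro U hU
      rw [Finset.mem_filter, Finset.mem_powerset] at hU
      have hM := fun P hP => hDmon P (hU.1 hP)
      have hI := fun P hP => hDirr P (hU.1 hP)
      rw [muFF_prodU hI hM, OmegaFF, NSet_prodU hI hM]
  -- Step 3: reindex by (minimal prime, rest)
  have hstep3 : ∑ σ ∈ ((normalizedFactors A).toFinset.filter (fun P => P ∈ S)).sigma
        (fun P => ((normalizedFactors A).toFinset.filter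
          (fun Q => P.natDegree < Q.natDegree)).powerset),
          (-1 : ℤ) ^ (σ.2.card + 1) * (1 + ((σ.2.image Polynomial.natDegree).card : ℤ))
      = ∑ U ∈ (normalizedFactors A).toFinset.powerset.filter
        (fun U => ∃ P ∈ U, P ∈ S ∧ ∀ Q ∈ U, Q ≠ P → P.natDegree < Q.natDegree),
          (-1 : ℤ) ^ U.card * ((U.image Polynomial.natDegree).card : ℤ) := by
    refine Finset.sum_bij (fun σ _ => insert σ.1 σ.2) ?_ ?_ ?_ ?_
    · rintro ⟨P, U'⟩ hσ
      rw [Finset.mem_sigma, Finset.mem_filter, Finset.mem_powerset] at hσ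
      dsimp only at hσ
      obtain ⟨⟨hPD, hPS⟩, hU'⟩ := hσ
      rw [Finset.mem_filter, Finset.mem_powerset]
      constructor
      · intro Q hQ
        rcases Finset.mem_insert.mp hQ with rfl | hQ'
        · exact hPD
        · exact Finset.mem_filter.mp (hU' hQ') |>.1
      · refine ⟨P, Finset.mem_insert_self _ _, hPS, fun Q hQ hQP => ?_⟩
        rcases Finset.mem_insert.mp hQ with rfl | hQ'
        · exact absurd rfl hQP
        · exact (Finset.mem_filter.mp (hU' hQ')).2
    · rintro ⟨P, U'⟩ h1 ⟨R, V'⟩ h2 heq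
      rw [Finset.mem_sigma, Finset.mem_filter, Finset.mem_powerset] at h1 h2
      dsimp only at h1 h2
      have heq' : insert P U' = insert R V' := heq
      have hPnotin : P ∉ U' := fun h =>
        lt_irrefl _ (Finset.mem_filter.mp (h1.2 h)).2
      have hRnotin : R ∉ V' := fun h =>
        lt_irrefl _ (Finset.mem_filter.mp (h2.2 h)).2
      have hPR : P = R := by
        by_contra hne
        have hPmem : P ∈ insert R V' := heq' ▸ Finset.mem_insert_self P U'
        have hRmem : R ∈ insert P U' := heq'.symm ▸ Finset.mem_insert_self R V'
        have h1' : P ∈ V' := (Finset.mem_insert.mp hPmem).resolve_left hne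
        have h2' : R ∈ U' := (Finset.mem_insert.mp hRmem).resolve_left (Ne.symm hne)
        have := (Finset.mem_filter.mp (h2.2 h1')).2
        have := (Finset.mem_filter.mp (h1.2 h2')).2
        omega
      subst hPR
      have hUV : U' = V' := by
        have := congrArg (fun s => Finset.erase s P) heq'
        simpa [Finset.erase_insert hPnotin, Finset.erase_insert hRnotin] using this
      rw [hUV]
    · intro U hU
      rw [Finset.mem_filter, Finset.mem_powerset] at hU
      obtain ⟨hUD, P, hPU, hPS, hmin⟩ := hU
      refine ⟨⟨P, U.erase P⟩, ?_, Finset.insert_erase hPU⟩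
      rw [Finset.mem_sigma, Finset.mem_filter, Finset.mem_powerset]
      refine ⟨⟨hUD hPU, hPS⟩, fun Q hQ => ?_⟩
      have hQU := Finset.mem_of_mem_erase hQ
      have hQP := Finset.ne_of_mem_erase hQ
      exact Finset.mem_filter.mpr ⟨hUD hQU, hmin Q hQU hQP⟩
    · rintro ⟨P, U'⟩ hσ
      rw [Finset.mem_sigma, Finset.mem_filter, Finset.mem_powerset] at hσ
      dsimp only at hσ ⊢
      obtain ⟨⟨hPD, hPS⟩, hU'⟩ := hσ
      have hPnotin : P ∉ U' := fun h =>
        lt_irrefl _ (Finset.mem_filter.mp (hU' h)).2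
      have hdegnot : P.natDegree ∉ U'.image Polynomial.natDegree := by
        rw [Finset.mem_image]
        rintro ⟨Q, hQ, hdeg⟩
        have := (Finset.mem_filter.mp (hU' hQ)).2
        omega
      rw [Finset.card_insert_of_notMem hPnotin, Finset.image_insert,
        Finset.card_insert_of_notMem hdegnot]
      push_cast
      ring
  -- Step 4+5: inner sums and indicator identification
  have hstep4 : ∑ σ ∈ ((normalizedFactors A).toFinset.filter (fun P => P ∈ S)).sigma
        (fun P => ((normalizedFactors A).toFinset.filter
          (fun Q => P.natDegree < Q.natDegree)).powerset),
          (-1 : ℤ) ^ (σ.2.card + 1) * (1 + ((σ.2.image Polynomial.natDegree).card : ℤ))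
      = ∑ P ∈ (normalizedFactors A).toFinset.filter (fun P => P ∈ S),
          ((if P.natDegree = DeltaLarge 2 A then (1 : ℤ) else 0)
            - (if P.natDegree = DeltaLarge 1 A then (1 : ℤ) else 0)) := by
    rw [Finset.sum_sigma]
    refine Finset.sum_congr rfl fun P hP => ?_
    have hPD : P ∈ (normalizedFactors A).toFinset := (Finset.mem_filter.mp hP).1
    rw [innerPowSum]
    congr 1
    · rw [if_congr (indicator_two hA0 hPD) rfl rfl]
    · rw [if_congr (indicator_one hA0 hPD) rfl rfl]
  -- Step 6: count
  have hstep6 : ∑ P ∈ (normalizedFactors A).toFinset.filter (fun P => P ∈ S),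
          ((if P.natDegree = DeltaLarge 2 A then (1 : ℤ) else 0)
            - (if P.natDegree = DeltaLarge 1 A then (1 : ℤ) else 0))
      = (QS S 2 A : ℤ) - (QS S 1 A : ℤ) := by
    rw [Finset.sum_sub_distrib]
    congr 1
    · rw [Finset.sum_boole, Finset.filter_filter, QS_eq_card S hS hA0 2]
    · rw [Finset.sum_boole, Finset.filter_filter, QS_eq_card S hS hA0 1]
  rw [← hstep1, ← hstep2, ← hstep3, hstep4, hstep6]

end Aux

/-- The partial-sum identity relating the restricted weighted Möbius sum to the averages of
`Q_𝒮^{(2)} - Q_𝒮^{(1)}` over monic polynomials of degree `n`. -/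
theorem stmt12 (S : Set (Polynomial F))
    (hS : S ⊆ {P : Polynomial F | P.Monic ∧ Irreducible P})
    (n : ℕ) (hn : 0 < n) :
    ∑ᶠ B ∈ {B : Polynomial F | B ∈ DSet S ∧ 1 ≤ B.natDegree ∧ B.natDegree ≤ n},
        (muFF B : ℝ) * (OmegaFF B : ℝ) / (Fintype.card F : ℝ) ^ B.natDegree
      = (1 / (Fintype.card F : ℝ) ^ n) *
          ∑ᶠ A ∈ {A : Polynomial F | A.Monic ∧ A.natDegree = n},
            ((QS S 2 A : ℝ) - (QS S 1 A : ℝ)) := by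
  classical
  have hq0 : (0:ℝ) < (Fintype.card F : ℝ) := by exact_mod_cast Fintype.card_pos
  have hTfin : {B : Polynomial F | B ∈ DSet S ∧ 1 ≤ B.natDegree ∧ B.natDegree ≤ n}.Finite :=
    (aux_finite_le n).subset (fun B hB => hB.2.2)
  have hMfin : {A : Polynomial F | A.Monic ∧ A.natDegree = n}.Finite :=
    (aux_finite_le n).subset (fun A hA => le_of_eq hA.2)
  rw [← Set.Finite.coe_toFinset hTfin, finsum_mem_coe_finset,
    ← Set.Finite.coe_toFinset hMfin, finsum_mem_coe_finset]
  set T := hTfin.toFinset with hTdef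
  set M := hMfin.toFinset with hMdef
  have hTmem : ∀ B, B ∈ T ↔ B ∈ DSet S ∧ 1 ≤ B.natDegree ∧ B.natDegree ≤ n := by
    intro B; rw [hTdef, Set.Finite.mem_toFinset]; rfl
  have hMmem : ∀ A, A ∈ M ↔ A.Monic ∧ A.natDegree = n := by
    intro A; rw [hMdef, Set.Finite.mem_toFinset]; rfl
  -- counting multiples
  have hcount : ∀ B ∈ T, ((Fintype.card F : ℝ)) ^ (n - B.natDegree)
      = ((M.filter (fun A => B ∣ A)).card : ℝ) := by
    intro B hB
    obtain ⟨hBD, hBdeg1, hBdegn⟩ := (hTmem B).mp hB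
    have hBmon : B.Monic := hBD.1
    have hset : {A : Polynomial F | A.Monic ∧ A.natDegree = n ∧ B ∣ A}
        = ↑(M.filter (fun A => B ∣ A)) := by
      ext A
      simp only [Set.mem_setOf_eq, Finset.coe_filter, Finset.mem_filter, Set.mem_setOf_eq]
      rw [hMmem A]
      tauto
    have := card_multiples B hBmon hBdegn
    rw [hset, Set.ncard_coe_finset] at this
    rw [this]
    norm_cast
  -- main swap
  have hswap : ∑ B ∈ T, (muFF B : ℝ) * (OmegaFF B : ℝ) * (Fintype.card F : ℝ) ^ (n - B.natDegree)
      = ∑ A ∈ M, ((QS S 2 A : ℝ) - (QS S 1 A : ℝ)) := by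
    calc ∑ B ∈ T, (muFF B : ℝ) * (OmegaFF B : ℝ) * (Fintype.card F : ℝ) ^ (n - B.natDegree)
        = ∑ B ∈ T, ∑ A ∈ M, (if B ∣ A then (muFF B : ℝ) * (OmegaFF B : ℝ) else 0) := by
          refine Finset.sum_congr rfl fun B hB => ?_
          rw [hcount B hB, ← Finset.sum_filter, Finset.sum_const, nsmul_eq_mul]
          ring
      _ = ∑ A ∈ M, ∑ B ∈ T, (if B ∣ A then (muFF B : ℝ) * (OmegaFF B : ℝ) else 0) :=
          Finset.sum_comm
      _ = ∑ A ∈ M, ((QS S 2 A : ℝ) - (QS S 1 A : ℝ)) := by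
          refine Finset.sum_congr rfl fun A hA => ?_
          obtain ⟨hAmon, hAdeg⟩ := (hMmem A).mp hA
          have hA0 : A ≠ 0 := hAmon.ne_zero
          have hT' : ∀ B, B ∈ T.filter (fun B => B ∣ A) ↔ B ∈ DSet S ∧ B ∣ A := by
            intro B
            rw [Finset.mem_filter, hTmem B]
            constructor
            · rintro ⟨⟨h1, -, -⟩, h2⟩
              exact ⟨h1, h2⟩
            · rintro ⟨hBD, hBdvd⟩
              have hBmon : B.Monic := hBD.1
              obtain ⟨P, hPS, hPeq⟩ := hBD.2
              have hPmem : P ∈ Pmin B := by rw [hPeq]; rfl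
              obtain ⟨hPmon, hPirr, hPdvd, -⟩ := hPmem
              have hB0 : B ≠ 0 := hBmon.ne_zero
              have h1le : 1 ≤ B.natDegree :=
                le_trans hPirr.natDegree_pos (Polynomial.natDegree_le_of_dvd hPdvd hB0)
              have hlen : B.natDegree ≤ n := by
                rw [← hAdeg]
                exact Polynomial.natDegree_le_of_dvd hBdvd hA0
              exact ⟨⟨hBD, h1le, hlen⟩, hBdvd⟩
          have hper := perA S hS hAmon (T.filter (fun B => B ∣ A)) hT'
          have hcast := congrArg (fun z : ℤ => (z : ℝ)) hper
          push_cast at hcast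
          rw [← Finset.sum_filter, hcast]
  -- final computation
  rw [← hswap, Finset.mul_sum]
  refine Finset.sum_congr rfl fun B hB => ?_
  obtain ⟨-, -, hBdegn⟩ := (hTmem B).mp hB
  have hpow : (Fintype.card F : ℝ) ^ n
      = (Fintype.card F : ℝ) ^ B.natDegree * (Fintype.card F : ℝ) ^ (n - B.natDegree) := by
    rw [← pow_add]
    congr 1
    omega
  rw [hpow]
  have h1 : (Fintype.card F : ℝ) ^ B.natDegree ≠ 0 := (pow_pos hq0 _).ne'
  have h2 : (Fintype.card F : ℝ) ^ (n - B.natDegree) ≠ 0 := (pow_pos hq0 _).ne'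
  field_simp
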